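/- Let J be an adapted complex structure on a finite simple graph G. If v is an isolated vertex of G, then Jv or −Jv is either a vertex of even degree or a distinguished edge. -/
import Mathlib


/-!  Framework: the 2-step nilpotent Lie algebra `𝔫_G` associated to a finite simple
graph `G` (Dani–Mainkar construction), and adapted complex structures on it. -/

open scoped BigOperators
set_option linter.unusedSectionVars false

namespace GraphLie

variable {V : Type*} [Fintype V] [LinearOrder V]

/-- The underlying real vector space of the Lie algebra `𝔫_G` associated to a graph `G`:
real-valued functions on its basis `V ⊕ G.edgeSet` (vertices and edges). -/
abbrev Niln (G : SimpleGraph V) : Type _ := (V ⊕ G.edgeSet) → ℝ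

variable (G : SimpleGraph V) [DecidableRel G.Adj]

/-- The basis vector of `𝔫_G` corresponding to the vertex `v`. -/
noncomputable def vtx (v : V) : Niln G := Pi.single (Sum.inl v) 1

/-- The basis vector of `𝔫_G` corresponding to the edge `e`. -/
noncomputable def edg (e : G.edgeSet) : Niln G := Pi.single (Sum.inr e) 1

/-- The basis vector of `𝔫_G` corresponding to a vertex or an edge. -/
noncomputable def basisVec (b : V ⊕ G.edgeSet) : Niln G := Pi.single b 1

/-- The bracket of two vertex generators: for adjacent vertices `i < j` (with respect to
the chosen labeling of the vertices) `[v_i, v_j] = e_{i,j}` and `[v_j, v_i] = -e_{i,j}`;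
non-adjacent vertices commute. -/
noncomputable def bracketVtx (i j : V) : Niln G :=
  if h : G.Adj i j then
    (if i < j then edg G ⟨s(i, j), G.mem_edgeSet.mpr h⟩
     else - edg G ⟨s(i, j), G.mem_edgeSet.mpr h⟩)
  else 0

/-- The Lie bracket of `𝔫_G`, extended bilinearly from the generators; all the
edge generators are central. -/
noncomputable def bracket (x y : Niln G) : Niln G :=
  ∑ i : V, ∑ j : V, (x (Sum.inl i) * y (Sum.inl j)) • bracketVtx G i j

/-- An adapted complex structure on the graph `G`: a linear endomorphism `J` of `𝔫_G`
with `J ∘ J = -id`, whose Nijenhuis tensor vanishes, and which sends each basis vector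
(vertex or edge) to plus or minus a basis vector. -/
structure AdaptedCS : Type _ where
  J : Niln G →ₗ[ℝ] Niln G
  j_squared : ∀ x, J (J x) = -x
  integrable : ∀ x y,
    bracket G x y + J (bracket G (J x) y + bracket G x (J y)) - bracket G (J x) (J y) = 0
  adapted : ∀ b : V ⊕ G.edgeSet,
    (∃ b', J (basisVec G b) = basisVec G b') ∨ (∃ b', J (basisVec G b) = - basisVec G b')

variable {G}

/-- An edge of `G` joining vertices `v` and `w` is distinguished if `Jv = w` or `Jw = v`. -/
def AdaptedCS.Distinguished (Jc : AdaptedCS G) (e : G.edgeSet) : Prop :=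
  ∃ v w : V, (e : Sym2 V) = s(v, w) ∧
    (Jc.J (vtx G v) = vtx G w ∨ Jc.J (vtx G w) = vtx G v)

end GraphLie


namespace GraphLie

variable {V : Type*} [Fintype V] [LinearOrder V] {G : SimpleGraph V} [DecidableRel G.Adj]

lemma vtx_ne_zero (a : V) : vtx G a ≠ 0 := by
  intro h
  have := congrFun h (Sum.inl a)
  simp [vtx, Pi.single_apply] at this

lemma edg_ne_zero (e : G.edgeSet) : edg G e ≠ 0 := by
  intro h
  have := congrFun h (Sum.inr e)
  simp [edg, Pi.single_apply] at this

lemma vtx_injective : Function.Injective (vtx G) := by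
  intro a b h
  have := congrFun h (Sum.inl b)
  by_contra hab
  simp [vtx, Pi.single_apply, Ne.symm hab] at this

lemma vtx_ne_neg (a b : V) : vtx G a ≠ - vtx G b := by
  intro h
  have := congrFun h (Sum.inl a)
  simp [vtx, Pi.single_apply] at this
  split_ifs at this <;> norm_num at this

lemma edg_apply_inl (e : G.edgeSet) (k : V) : edg G e (Sum.inl k) = 0 := by
  simp [edg, Pi.single_apply]

lemma vtx_apply_inl (a k : V) : vtx G a (Sum.inl k) = if k = a then 1 else 0 := by
  simp [vtx, Pi.single_apply]

lemma bracketVtx_apply_inl (i j : V) (k : V) : bracketVtx G i j (Sum.inl k) = 0 := by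
  unfold bracketVtx
  split_ifs <;> simp [edg, Pi.single_apply]

lemma bracket_apply_inl (x y : Niln G) (k : V) : bracket G x y (Sum.inl k) = 0 := by
  unfold bracket
  simp [Finset.sum_apply, bracketVtx_apply_inl]

lemma bracket_eq_zero_left {x : Niln G} (h : ∀ i, x (Sum.inl i) = 0) (y : Niln G) :
    bracket G x y = 0 := by
  unfold bracket
  simp [h]

lemma bracket_eq_zero_right (x : Niln G) {y : Niln G} (h : ∀ i, y (Sum.inl i) = 0) :
    bracket G x y = 0 := by
  unfold bracket
  simp [h]

lemma bracket_neg_left (x y : Niln G) : bracket G (-x) y = - bracket G x y := by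
  unfold bracket
  rw [← Finset.sum_neg_distrib]
  refine Finset.sum_congr rfl fun i _ => ?_
  rw [← Finset.sum_neg_distrib]
  refine Finset.sum_congr rfl fun j _ => ?_
  simp [neg_smul]

lemma bracket_neg_right (x y : Niln G) : bracket G x (-y) = - bracket G x y := by
  unfold bracket
  rw [← Finset.sum_neg_distrib]
  refine Finset.sum_congr rfl fun i _ => ?_
  rw [← Finset.sum_neg_distrib]
  refine Finset.sum_congr rfl fun j _ => ?_
  simp [neg_smul]

lemma bracket_vtx_vtx (i j : V) : bracket G (vtx G i) (vtx G j) = bracketVtx G i j := by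
  unfold bracket
  rw [Finset.sum_eq_single i]
  · rw [Finset.sum_eq_single j]
    · simp [vtx_apply_inl]
    · intro b _ hb; simp [vtx_apply_inl, hb]
    · simp
  · intro b _ hb; simp [vtx_apply_inl, hb]
  · simp

lemma edg_injective : Function.Injective (edg G) := by
  intro a b h
  have := congrFun h (Sum.inr b)
  by_contra hab
  simp [edg, Pi.single_apply, Ne.symm hab] at this

lemma edg_ne_neg (a b : G.edgeSet) : edg G a ≠ - edg G b := by
  intro h
  have := congrFun h (Sum.inr a)
  simp [edg, Pi.single_apply] at this
  split_ifs at this <;> norm_num at this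

lemma basisVec_inl (a : V) : basisVec G (Sum.inl a) = vtx G a := rfl

lemma basisVec_inr (e : G.edgeSet) : basisVec G (Sum.inr e) = edg G e := rfl

lemma eq_inl_of_basisVec_apply_ne_zero {b : V ⊕ G.edgeSet} {k : V}
    (h : basisVec G b (Sum.inl k) ≠ 0) : b = Sum.inl k := by
  by_contra hb
  simp [basisVec, Pi.single_apply, Ne.symm hb] at h

lemma bracketVtx_eq_zero_of_not_adj {i j : V} (h : ¬ G.Adj i j) : bracketVtx G i j = 0 :=
  dif_neg h

lemma bracketVtx_cases {i j : V} (h : G.Adj i j) :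
    bracketVtx G i j = edg G ⟨s(i,j), G.mem_edgeSet.mpr h⟩ ∨
    bracketVtx G i j = - edg G ⟨s(i,j), G.mem_edgeSet.mpr h⟩ := by
  unfold bracketVtx
  rw [dif_pos h]
  split_ifs <;> simp

lemma bracketVtx_ne_zero {i j : V} (h : G.Adj i j) : bracketVtx G i j ≠ 0 := by
  rcases bracketVtx_cases h with hB | hB <;> rw [hB]
  · exact edg_ne_zero _
  · simpa using edg_ne_zero (G := G) ⟨s(i,j), G.mem_edgeSet.mpr h⟩

lemma bracket_vtx_left (a : V) (y : Niln G) :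
    bracket G (vtx G a) y = ∑ j, y (Sum.inl j) • bracketVtx G a j := by
  unfold bracket
  rw [Finset.sum_eq_single a]
  · refine Finset.sum_congr rfl fun j _ => ?_
    simp [vtx_apply_inl]
  · intro b _ hb
    simp [vtx_apply_inl, hb]
  · simp

lemma AdaptedCS.j_injective (Jc : AdaptedCS G) : Function.Injective Jc.J := by
  intro x y h
  have := congrArg Jc.J h
  rwa [Jc.j_squared, Jc.j_squared, neg_inj] at this

lemma AdaptedCS.j_ne_zero (Jc : AdaptedCS G) {x : Niln G} (h : x ≠ 0) : Jc.J x ≠ 0 := by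
  intro h0
  exact h (Jc.j_injective (by rw [h0, map_zero]))

/-- The relation `Jc.J (vtx u) = ± vtx u'`. -/
def Pv (Jc : AdaptedCS G) (u u' : V) : Prop :=
  Jc.J (vtx G u) = vtx G u' ∨ Jc.J (vtx G u) = - vtx G u'

lemma Pv_unique {Jc : AdaptedCS G} {u a b : V} (ha : Pv Jc u a) (hb : Pv Jc u b) : a = b := by
  rcases ha with ha | ha <;> rcases hb with hb | hb
  · exact vtx_injective (ha.symm.trans hb)
  · exact absurd (ha.symm.trans hb) (vtx_ne_neg a b)
  · exact absurd (hb.symm.trans ha) (vtx_ne_neg b a)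
  · exact vtx_injective (neg_injective (ha.symm.trans hb))

lemma Pv_symm {Jc : AdaptedCS G} {u u' : V} (h : Pv Jc u u') : Pv Jc u' u := by
  rcases h with h | h
  · right
    have := congrArg Jc.J h
    rw [Jc.j_squared] at this
    exact this.symm
  · left
    have := congrArg Jc.J h
    rw [Jc.j_squared, map_neg] at this
    exact (neg_injective this).symm

lemma Pv_irrefl {Jc : AdaptedCS G} {u : V} (h : Pv Jc u u) : False := by
  rcases h with h | h
  · have := congrArg Jc.J h
    rw [Jc.j_squared, h] at this
    exact vtx_ne_neg u u this.symm
  · have := congrArg Jc.J h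
    rw [Jc.j_squared, map_neg, h, neg_neg] at this
    exact vtx_ne_neg u u this.symm

lemma even_card_of_fpf {α : Type*} [DecidableEq α] (f : α → α) :
    ∀ n (s : Finset α), s.card = n → (∀ x ∈ s, f x ∈ s) → (∀ x ∈ s, f (f x) = x) →
      (∀ x ∈ s, f x ≠ x) → Even s.card := by
  intro n
  induction n using Nat.strong_induction_on with
  | _ n ih =>
    intro s hn hmem hinv hne
    rcases s.eq_empty_or_nonempty with rfl | ⟨x, hx⟩
    · simp
    · have hfx := hmem x hx
      have hpair : ({x, f x} : Finset α) ⊆ s := by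
        intro y hy
        simp only [Finset.mem_insert, Finset.mem_singleton] at hy
        rcases hy with rfl | rfl
        exacts [hx, hfx]
      have hcardpair : ({x, f x} : Finset α).card = 2 := by
        rw [Finset.card_insert_of_notMem (by simp [Ne.symm (hne x hx)]),
          Finset.card_singleton]
      set t := s \ {x, f x} with ht
      have hsub : t ⊆ s := Finset.sdiff_subset
      have htmem : ∀ y ∈ t, f y ∈ t := by
        intro y hy
        simp only [ht, Finset.mem_sdiff, Finset.mem_insert, Finset.mem_singleton] at hy ⊢
        obtain ⟨hys, hyx⟩ := hy
        push_neg at hyx ⊢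
        refine ⟨hmem y hys, ?_, ?_⟩
        · intro hfyx
          apply hyx.2
          rw [← hinv y hys, hfyx]
        · intro hfy
          apply hyx.1
          rw [← hinv y hys, hfy, hinv x hx]
      have h2 : 2 ≤ s.card := hcardpair ▸ Finset.card_le_card hpair
      have hcard : s.card = t.card + 2 := by
        rw [ht, Finset.card_sdiff_of_subset hpair, hcardpair]
        omega
      have hEt := ih t.card (by omega) t rfl htmem
        (fun y hy => hinv y (hsub hy)) (fun y hy => hne y (hsub hy))
      rw [hcard]
      exact hEt.add even_two

end GraphLie

namespace GraphLie

variable {V : Type*} [Fintype V] [LinearOrder V] {G : SimpleGraph V} [DecidableRel G.Adj]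


lemma not_adj_of_degree_zero {v : V} (hv : G.degree v = 0) (j : V) : ¬ G.Adj v j := by
  intro h
  have : j ∈ G.neighborFinset v := (SimpleGraph.mem_neighborFinset G v j).mpr h
  rw [← SimpleGraph.card_neighborFinset_eq_degree] at hv
  rw [Finset.card_eq_zero.mp hv] at this
  exact absurd this (Finset.notMem_empty j)

lemma bracket_isolated_left {v : V} (hv : G.degree v = 0) (y : Niln G) :
    bracket G (vtx G v) y = 0 := by
  rw [bracket_vtx_left]
  refine Finset.sum_eq_zero fun j _ => ?_
  rw [bracketVtx_eq_zero_of_not_adj (not_adj_of_degree_zero hv j), smul_zero]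

lemma neighbor_step (Jc : AdaptedCS G) {v w u : V} (hv : G.degree v = 0)
    (hJ : Jc.J (vtx G v) = vtx G w ∨ Jc.J (vtx G v) = - vtx G w)
    (hu : G.Adj w u) : ∃ u', Pv Jc u u' ∧ G.Adj w u' := by
  have hint := Jc.integrable (vtx G v) (vtx G u)
  rw [bracket_isolated_left hv, bracket_isolated_left hv, add_zero, zero_add] at hint
  have hkey : Jc.J (bracket G (vtx G w) (vtx G u)) =
      bracket G (vtx G w) (Jc.J (vtx G u)) := by
    rcases hJ with hJ | hJ
    · rw [hJ] at hint
      rw [← sub_eq_zero]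
      exact hint
    · rw [hJ, bracket_neg_left, bracket_neg_left, map_neg, sub_eq_zero] at hint
      exact neg_injective hint
  have hne : bracket G (vtx G w) (Jc.J (vtx G u)) ≠ 0 := by
    rw [← hkey, bracket_vtx_vtx]
    exact Jc.j_ne_zero (bracketVtx_ne_zero hu)
  rcases Jc.adapted (Sum.inl u) with ⟨b', hb⟩ | ⟨b', hb⟩ <;>
    rw [basisVec_inl] at hb <;>
    rcases b' with u' | e
  · refine ⟨u', Or.inl (by rw [hb, basisVec_inl]), ?_⟩
    rw [hb, basisVec_inl, bracket_vtx_vtx] at hne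
    by_contra hadj
    exact hne (bracketVtx_eq_zero_of_not_adj hadj)
  · exfalso
    rw [hb, basisVec_inr] at hne
    exact hne (bracket_eq_zero_right _ (edg_apply_inl e))
  · refine ⟨u', Or.inr (by rw [hb, basisVec_inl]), ?_⟩
    rw [hb, basisVec_inl, bracket_neg_right, bracket_vtx_vtx, neg_ne_zero] at hne
    by_contra hadj
    exact hne (bracketVtx_eq_zero_of_not_adj hadj)
  · exfalso
    rw [hb, basisVec_inr, bracket_neg_right, neg_ne_zero] at hne
    exact hne (bracket_eq_zero_right _ (edg_apply_inl e))

lemma vertexCase (Jc : AdaptedCS G) {v w : V} (hv : G.degree v = 0)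
    (hJ : Jc.J (vtx G v) = vtx G w ∨ Jc.J (vtx G v) = - vtx G w) :
    Even (G.degree w) := by
  classical
  set f : V → V := fun u => if h : ∃ u', Pv Jc u u' then h.choose else u with hfdef
  have hf : ∀ u u', Pv Jc u u' → f u = u' := by
    intro u u' h
    have hex : ∃ x, Pv Jc u x := ⟨u', h⟩
    rw [hfdef]
    simp only [dif_pos hex]
    exact Pv_unique hex.choose_spec h
  rw [← SimpleGraph.card_neighborFinset_eq_degree]
  refine even_card_of_fpf f (G.neighborFinset w).card (G.neighborFinset w) rfl ?_ ?_ ?_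
  · intro u humem
    obtain ⟨u', hP, hadj⟩ := neighbor_step Jc hv hJ
      ((SimpleGraph.mem_neighborFinset G w u).mp humem)
    rw [hf u u' hP]
    exact (SimpleGraph.mem_neighborFinset G w u').mpr hadj
  · intro u humem
    obtain ⟨u', hP, hadj⟩ := neighbor_step Jc hv hJ
      ((SimpleGraph.mem_neighborFinset G w u).mp humem)
    rw [hf u u' hP, hf u' u (Pv_symm hP)]
  · intro u humem
    obtain ⟨u', hP, hadj⟩ := neighbor_step Jc hv hJ
      ((SimpleGraph.mem_neighborFinset G w u).mp humem)
    rw [hf u u' hP]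
    intro hne
    exact Pv_irrefl (hne ▸ hP)

lemma edgeCase (Jc : AdaptedCS G) {v : V} (e : G.edgeSet)
    (hJ : Jc.J (vtx G v) = edg G e ∨ Jc.J (vtx G v) = - edg G e) :
    Jc.Distinguished e := by
  -- J sends the edge back to ± the vertex v
  have hJe : Jc.J (edg G e) = vtx G v ∨ Jc.J (edg G e) = - vtx G v := by
    rcases hJ with hJ | hJ
    · right
      have := congrArg Jc.J hJ
      rw [Jc.j_squared] at this
      exact this.symm
    · left
      have := congrArg Jc.J hJ
      rw [Jc.j_squared, map_neg] at this
      exact (neg_injective this).symm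
  -- choose endpoints of e
  obtain ⟨a, b, hab⟩ : ∃ a b, (e : Sym2 V) = s(a, b) := by
    induction (e : Sym2 V) using Sym2.ind with
    | _ x y => exact ⟨x, y, rfl⟩
  have hadj : G.Adj a b := G.mem_edgeSet.mp (hab ▸ e.2)
  have he' : (⟨s(a, b), G.mem_edgeSet.mpr hadj⟩ : G.edgeSet) = e := Subtype.ext hab.symm
  -- integrability at (a, b), apply J, evaluate at coordinate v
  have hint := Jc.integrable (vtx G a) (vtx G b)
  have hint2 := congrArg Jc.J hint
  rw [map_zero, map_sub, map_add, Jc.j_squared] at hint2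
  have hcoord := congrFun hint2 (Sum.inl v)
  simp only [Pi.sub_apply, Pi.add_apply, Pi.neg_apply, Pi.zero_apply,
    bracket_apply_inl, neg_add_rev, neg_zero, add_zero, zero_add, neg_neg] at hcoord
  -- hcoord : J[a,b](v) - J[Ja,Jb](v) = 0  (modulo arrangement)
  have hLne : (Jc.J (bracket G (vtx G a) (vtx G b))) (Sum.inl v) ≠ 0 := by
    rw [bracket_vtx_vtx]
    rcases bracketVtx_cases hadj with hB | hB <;> rw [hB, he'] <;>
      rcases hJe with hJe | hJe <;>
      simp [map_neg, hJe, vtx_apply_inl]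
  have hRne : (Jc.J (bracket G (Jc.J (vtx G a)) (Jc.J (vtx G b)))) (Sum.inl v) ≠ 0 := by
    intro h0
    rw [h0] at hcoord
    exact hLne (by linarith)
  -- extract ± vertex images of a and b
  have hpm_bracket : ∀ {x y x' y' : Niln G}, (x = x' ∨ x = -x') → (y = y' ∨ y = -y') →
      bracket G x y = bracket G x' y' ∨ bracket G x y = - bracket G x' y' := by
    intro x y x' y' hx hy
    rcases hx with rfl | rfl <;> rcases hy with rfl | rfl <;>
      simp [bracket_neg_left, bracket_neg_right]
  have hpm_apply : ∀ {x y : Niln G}, (x = y ∨ x = -y) → ∀ {i}, x i ≠ 0 → y i ≠ 0 := by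
    intro x y h i hx
    rcases h with rfl | rfl
    · exact hx
    · intro h0
      exact hx (by simp [h0])
  have hpm_J : ∀ {x y : Niln G}, (x = y ∨ x = -y) →
      (Jc.J x = Jc.J y ∨ Jc.J x = - Jc.J y) := by
    intro x y h
    rcases h with rfl | rfl
    · exact Or.inl rfl
    · exact Or.inr (map_neg _ _)
  have hPa : ∃ p, Pv Jc a p := by
    rcases Jc.adapted (Sum.inl a) with ⟨ba, hba⟩ | ⟨ba, hba⟩ <;> rw [basisVec_inl] at hba <;>
      rcases ba with p | e1
    · exact ⟨p, Or.inl hba⟩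
    · exfalso
      refine hRne ?_
      have h0 : bracket G (Jc.J (vtx G a)) (Jc.J (vtx G b)) = 0 := by
        rw [hba]
        exact bracket_eq_zero_left (fun i => edg_apply_inl e1 i) _
      rw [h0, map_zero]
      rfl
    · exact ⟨p, Or.inr hba⟩
    · exfalso
      refine hRne ?_
      have h0 : bracket G (Jc.J (vtx G a)) (Jc.J (vtx G b)) = 0 := by
        rw [hba, basisVec_inr, bracket_neg_left,
          bracket_eq_zero_left (fun i => edg_apply_inl e1 i) (Jc.J (vtx G b)), neg_zero]
      rw [h0, map_zero]
      rfl
  obtain ⟨p, hPa⟩ := hPa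
  have hPb : ∃ q, Pv Jc b q := by
    rcases Jc.adapted (Sum.inl b) with ⟨bb, hbb⟩ | ⟨bb, hbb⟩ <;> rw [basisVec_inl] at hbb <;>
      rcases bb with q | e1
    · exact ⟨q, Or.inl hbb⟩
    · exfalso
      refine hRne ?_
      have h0 : bracket G (Jc.J (vtx G a)) (Jc.J (vtx G b)) = 0 := by
        rw [hbb]
        exact bracket_eq_zero_right _ (fun i => edg_apply_inl e1 i)
      rw [h0, map_zero]
      rfl
    · exact ⟨q, Or.inr hbb⟩
    · exfalso
      refine hRne ?_
      have h0 : bracket G (Jc.J (vtx G a)) (Jc.J (vtx G b)) = 0 := by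
        rw [hbb, basisVec_inr, bracket_neg_right,
          bracket_eq_zero_right (Jc.J (vtx G a)) (fun i => edg_apply_inl e1 i), neg_zero]
      rw [h0, map_zero]
      rfl
  obtain ⟨q, hPb⟩ := hPb
  -- the bracket of p,q has nonzero coordinate at v after J
  have hbr := hpm_bracket hPa hPb
  rw [bracket_vtx_vtx] at hbr
  have hBne : (Jc.J (bracketVtx G p q)) (Sum.inl v) ≠ 0 := by
    have := hpm_J (x := bracket G (Jc.J (vtx G a)) (Jc.J (vtx G b)))
      (y := bracketVtx G p q) (by rcases hbr with h | h; exacts [Or.inl h, Or.inr h])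
    exact hpm_apply this hRne
  have hadjpq : G.Adj p q := by
    by_contra hpq
    rw [bracketVtx_eq_zero_of_not_adj hpq, map_zero] at hBne
    exact hBne rfl
  set e2 : G.edgeSet := ⟨s(p, q), G.mem_edgeSet.mpr hadjpq⟩ with he2
  have hEne : (Jc.J (edg G e2)) (Sum.inl v) ≠ 0 := by
    have hc := bracketVtx_cases hadjpq
    rw [← he2] at hc
    exact hpm_apply (hpm_J (by rcases hc with h | h; exacts [Or.inl h, Or.inr h])) hBne
  -- J (edg e2) = ± vtx v
  have hJe2 : Jc.J (edg G e2) = vtx G v ∨ Jc.J (edg G e2) = - vtx G v := by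
    rcases Jc.adapted (Sum.inr e2) with ⟨b3, hb3⟩ | ⟨b3, hb3⟩ <;>
      rw [basisVec_inr] at hb3
    · have : b3 = Sum.inl v := by
        apply eq_inl_of_basisVec_apply_ne_zero
        rw [← hb3]
        exact hEne
      rw [this, basisVec_inl] at hb3
      exact Or.inl hb3
    · have : b3 = Sum.inl v := by
        apply eq_inl_of_basisVec_apply_ne_zero
        intro h0
        rw [hb3] at hEne
        exact hEne (by simp [h0])
      rw [this, basisVec_inl] at hb3
      exact Or.inr hb3
  -- hence e2 = e
  have he2e : e2 = e := by
    have : edg G e2 = edg G e ∨ edg G e2 = - edg G e := by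
      rcases hJe2 with h2 | h2 <;> rcases hJe with h1 | h1
      · exact Or.inl (Jc.j_injective (h2.trans h1.symm))
      · refine Or.inr (Jc.j_injective ?_)
        rw [map_neg, h2, h1, neg_neg]
      · refine Or.inr (Jc.j_injective ?_)
        rw [map_neg, h2, h1]
      · exact Or.inl (Jc.j_injective (h2.trans h1.symm))
    rcases this with h | h
    · exact edg_injective h
    · exact absurd h (edg_ne_neg e2 e)
  have hsym : s(p, q) = s(a, b) := by
    have := congrArg Subtype.val he2e
    rw [he2] at this
    exact this.trans hab
  rcases Sym2.eq_iff.mp hsym with ⟨hp, hq⟩ | ⟨hp, hq⟩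
  · exact absurd (hp ▸ hPa) Pv_irrefl
  · rw [hp] at hPa
    refine ⟨a, b, hab, ?_⟩
    rcases hPa with h | h
    · exact Or.inl h
    · right
      have := congrArg Jc.J h
      rw [Jc.j_squared, map_neg] at this
      exact (neg_injective this).symm

/-- If `v` is an isolated vertex of `G`, then `Jv` or `-Jv` is either a
vertex of even degree or a distinguished edge. -/
theorem statement5 (Jc : AdaptedCS G) (v : V) (hv : G.degree v = 0) :
    (∃ w : V, Even (G.degree w) ∧
        (Jc.J (vtx G v) = vtx G w ∨ Jc.J (vtx G v) = - vtx G w)) ∨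
    (∃ e : G.edgeSet, Jc.Distinguished e ∧
        (Jc.J (vtx G v) = edg G e ∨ Jc.J (vtx G v) = - edg G e)) := by
  rcases Jc.adapted (Sum.inl v) with ⟨b', hb⟩ | ⟨b', hb⟩ <;>
      rw [basisVec_inl] at hb <;> rcases b' with w | e
  · rw [basisVec_inl] at hb
    exact Or.inl ⟨w, vertexCase Jc hv (Or.inl hb), Or.inl hb⟩
  · rw [basisVec_inr] at hb
    exact Or.inr ⟨e, edgeCase Jc e (Or.inl hb), Or.inl hb⟩
  · rw [basisVec_inl] at hb
    exact Or.inl ⟨w, vertexCase Jc hv (Or.inr hb), Or.inr hb⟩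
  · rw [basisVec_inr] at hb
    exact Or.inr ⟨e, edgeCase Jc e (Or.inr hb), Or.inr hb⟩

end GraphLie
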